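/- arXiv:1003.5222 — 3 statements merged into one kernel-verified Lean document; each statement's English description precedes it below -/
import Mathlib

section
/- For every real q ≥ 2, the quantity (q^3+q^2+q+1) · [q^{-2}(1-q^{-3})(1-q^{-2})] / [1 - q^{-2} + q^{-2}(1-q^{-3})(1-q^{-2})] is strictly less than q + 1. -/
/-- For every real `q ≥ 2`, the quantity
`(q^3+q^2+q+1)·[q^{-2}(1-q^{-3})(1-q^{-2})] / [1 - q^{-2} + q^{-2}(1-q^{-3})(1-q^{-2})]`
is strictly less than `q + 1`. -/
theorem stmt_5 (q : ℝ) (hq : 2 ≤ q) :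
    (q ^ 3 + q ^ 2 + q + 1) *
        (q ^ (-2 : ℤ) * (1 - q ^ (-3 : ℤ)) * (1 - q ^ (-2 : ℤ))) /
        (1 - q ^ (-2 : ℤ) + q ^ (-2 : ℤ) * (1 - q ^ (-3 : ℤ)) * (1 - q ^ (-2 : ℤ))) <
      q + 1 := by
  have hq0 : (0:ℝ) < q := by linarith
  have hqne : q ≠ 0 := ne_of_gt hq0
  have h2 : q ^ (-2 : ℤ) = (q ^ 2)⁻¹ := by
    rw [zpow_neg, show (2:ℤ) = (2:ℕ) from rfl, zpow_natCast]
  have h3 : q ^ (-3 : ℤ) = (q ^ 3)⁻¹ := by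
    rw [zpow_neg, show (3:ℤ) = (3:ℕ) from rfl, zpow_natCast]
  have h4 : (16:ℝ) ≤ q ^ 4 := by nlinarith [sq_nonneg q, sq_nonneg (q-2), sq_nonneg (q^2-4)]
  have hDpoly : (0:ℝ) < q ^ 7 - q ^ 3 - q ^ 2 + 1 := by
    nlinarith [pow_pos hq0 3, pow_pos hq0 2, mul_le_mul_of_nonneg_left h4 (le_of_lt (pow_pos hq0 3))]
  have heq : (q ^ 3 + q ^ 2 + q + 1) *
        (q ^ (-2 : ℤ) * (1 - q ^ (-3 : ℤ)) * (1 - q ^ (-2 : ℤ))) /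
        (1 - q ^ (-2 : ℤ) + q ^ (-2 : ℤ) * (1 - q ^ (-3 : ℤ)) * (1 - q ^ (-2 : ℤ))) =
      (q ^ 3 + q ^ 2 + q + 1) * (q ^ 5 - q ^ 3 - q ^ 2 + 1) /
        (q ^ 7 - q ^ 3 - q ^ 2 + 1) := by
    rw [h2, h3]
    rw [div_eq_div_iff]
    · field_simp
      ring
    · have h2pos : (0:ℝ) < q ^ 2 := by positivity
      have h3pos : (0:ℝ) < q ^ 3 := by positivity
      have h2inv : (q ^ 2)⁻¹ ≤ 1/4 := by
        rw [inv_le_iff_one_le_mul₀ h2pos]; nlinarith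
      have h3inv : (q ^ 3)⁻¹ ≤ 1/8 := by
        rw [inv_le_iff_one_le_mul₀ h3pos]; nlinarith
      have h2invpos : (0:ℝ) < (q ^ 2)⁻¹ := by positivity
      have hb : (0:ℝ) < 1 - (q ^ 3)⁻¹ := by linarith
      have ha : (0:ℝ) < 1 - (q ^ 2)⁻¹ := by linarith
      have := mul_pos (mul_pos h2invpos hb) ha
      linarith
    · exact ne_of_gt hDpoly
  rw [heq, div_lt_iff₀ hDpoly]
  nlinarith [pow_pos hq0 5, pow_pos hq0 4, pow_pos hq0 3, pow_pos hq0 2]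
end

section
/- For real q ≥ 2 and integer n ≥ 3, the limiting average ((q^{n+1}-1)/(q-1)) · q^{1-n}L(q,n,n-1)/(1 - q^{1-n} + q^{1-n}L(q,n,n-1)) is strictly less than q+1, where L(q,n,n-1) = ∏_{i=2}^{n}(1-q^{-i}). -/
/-- For real `q ≥ 2` and integer `n ≥ 3`, the limiting average
`((q^{n+1}-1)/(q-1)) · q^{1-n}L(q,n,n-1)/(1 - q^{1-n} + q^{1-n}L(q,n,n-1))` is strictly
less than `q+1`, where `L(q,n,n-1) = ∏_{i=2}^{n}(1-q^{-i})`. -/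
theorem stmt_9 (q : ℝ) (hq : 2 ≤ q) (n : ℕ) (hn : 3 ≤ n) :
    ((q ^ (n + 1) - 1) / (q - 1)) *
      (q ^ (1 - (n : ℤ)) * (∏ i ∈ Finset.Icc 2 n, (1 - q ^ (-(i : ℤ)))) /
        (1 - q ^ (1 - (n : ℤ)) +
          q ^ (1 - (n : ℤ)) * ∏ i ∈ Finset.Icc 2 n, (1 - q ^ (-(i : ℤ))))) <
    q + 1 := by
  have hq0 : (0:ℝ) < q := by linarith
  have hq1 : (1:ℝ) < q := by linarith
  set a : ℝ := q ^ (1 - (n : ℤ)) with ha_def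
  set L : ℝ := ∏ i ∈ Finset.Icc 2 n, (1 - q ^ (-(i : ℤ))) with hL_def
  -- factor bounds
  have hfac : ∀ i : ℕ, 1 ≤ i → 0 < 1 - q ^ (-(i : ℤ)) ∧ q ^ (-(i : ℤ)) ≤ 1/2 := by
    intro i hi
    have h1 : (1:ℝ) ≤ q ^ (i : ℤ) := one_le_zpow₀ (le_of_lt hq1) (by exact_mod_cast Nat.zero_le i)
    have h2 : (2:ℝ) ≤ q ^ (i : ℤ) := by
      calc (2:ℝ) ≤ q := hq
        _ = q ^ (1:ℤ) := (zpow_one q).symm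
        _ ≤ q ^ (i : ℤ) := by
            apply zpow_le_zpow_right₀ (le_of_lt hq1)
            exact_mod_cast hi
    have h3 : q ^ (-(i:ℤ)) = (q ^ (i:ℤ))⁻¹ := zpow_neg q _
    have hpos : (0:ℝ) < q ^ (i:ℤ) := zpow_pos hq0 _
    constructor
    · rw [h3]
      have : (q ^ (i:ℤ))⁻¹ ≤ 1/2 := by
        rw [inv_le_comm₀ hpos (by norm_num)]
        linarith
      linarith
    · rw [h3, inv_le_comm₀ hpos (by norm_num)]
      linarith
  -- L pos
  have hL0 : 0 < L := by
    rw [hL_def]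
    apply Finset.prod_pos
    intro i hi
    have := Finset.mem_Icc.mp hi
    exact (hfac i (by omega)).1
  -- split product
  have hset : Finset.Icc 2 n = insert 2 (insert 3 (Finset.Icc 4 n)) := by
    ext x; simp [Finset.mem_Icc]; omega
  have hQ1 : ∏ i ∈ Finset.Icc 4 n, (1 - q ^ (-(i : ℤ))) ≤ 1 := by
    apply Finset.prod_le_one
    · intro i hi
      have := Finset.mem_Icc.mp hi
      exact le_of_lt (hfac i (by omega)).1
    · intro i hi
      have := zpow_pos hq0 (-(i:ℤ))
      linarith
  have hQ0 : 0 < ∏ i ∈ Finset.Icc 4 n, (1 - q ^ (-(i : ℤ))) := by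
    apply Finset.prod_pos
    intro i hi
    have := Finset.mem_Icc.mp hi
    exact (hfac i (by omega)).1
  have hLsplit : L = (1 - q ^ (-(2:ℤ))) * ((1 - q ^ (-(3:ℤ))) * ∏ i ∈ Finset.Icc 4 n, (1 - q ^ (-(i : ℤ)))) := by
    rw [hL_def, hset, Finset.prod_insert (by simp), Finset.prod_insert (by simp)]
    norm_num
  -- key bound: q^2 * L < q^2 - 1
  have h2pos : (0:ℝ) < q ^ (-(2:ℤ)) := zpow_pos hq0 _
  have h3pos : (0:ℝ) < q ^ (-(3:ℤ)) := zpow_pos hq0 _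
  have hf2 : 0 < 1 - q ^ (-(2:ℤ)) := by
    have := (hfac 2 (by norm_num)).1; push_cast at this ⊢; exact this
  have hf3 : 0 < 1 - q ^ (-(3:ℤ)) := by
    have := (hfac 3 (by norm_num)).1; push_cast at this ⊢; exact this
  have hLlt : L < 1 - q ^ (-(2:ℤ)) := by
    rw [hLsplit]
    have h1 : (1 - q ^ (-(3:ℤ))) * ∏ i ∈ Finset.Icc 4 n, (1 - q ^ (-(i : ℤ))) < 1 := by
      nlinarith [mul_pos h3pos hQ0]
    exact mul_lt_of_lt_one_right hf2 h1
  have hq2 : q ^ (-(2:ℤ)) = (q^2)⁻¹ := by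
    rw [zpow_neg]; norm_num
  have hLq2 : q^2 * L < q^2 - 1 := by
    have hq2pos : (0:ℝ) < q^2 := by positivity
    have : q^2 * L < q^2 * (1 - (q^2)⁻¹) := by
      apply mul_lt_mul_of_pos_left _ hq2pos
      rw [← hq2]; exact hLlt
    rw [mul_sub, mul_inv_cancel₀ (ne_of_gt hq2pos)] at this
    linarith
  -- a bounds
  have ha0 : 0 < a := zpow_pos hq0 _
  have ha1 : a < 1 := by
    rw [ha_def]
    apply zpow_lt_one_of_neg₀ hq1
    omega
  -- key identity
  have hkey : q ^ (n+1) * a = q^2 := by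
    rw [ha_def, ← zpow_natCast q (n+1), ← zpow_add₀ (ne_of_gt hq0)]
    push_cast
    have h2 : (↑n + 1) + (1 - (n:ℤ)) = 2 := by ring
    rw [h2]
    exact_mod_cast rfl
  -- denominator pos
  have hD : 0 < 1 - a + a * L := by nlinarith
  have hq1' : 0 < q - 1 := by linarith
  rw [div_mul_div_comm, div_lt_iff₀ (by positivity)]
  nlinarith [mul_pos (sub_pos.2 ha1) (sub_pos.2 hLq2), mul_pos ha0 hL0]
end

section
/- For real q > 1, as n → ∞ the quantity ((q^{n+1}-1)/(q-1)) · q^{1-n}L(q,n,n-1)/(1 - q^{1-n} + q^{1-n}L(q,n,n-1)), with L(q,n,n-1) = ∏_{i=2}^{n}(1-q^{-i}), converges to (q+1)·∏_{n=3}^{∞}(1 - q^{-n}). -/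
set_option maxHeartbeats 800000

open Filter

private lemma aux_g_pos {q : ℝ} (hq : 1 < q) (k : ℤ) (hk : 1 ≤ k) (i : ℕ) :
    0 < 1 - q ^ (-(i : ℤ) - k) := by
  have hq0 : (0:ℝ) < q := lt_trans one_pos hq
  have h1 : q ^ (-(i : ℤ) - k) < 1 := by
    have : (1:ℝ) = q ^ (0:ℤ) := (zpow_zero q).symm
    rw [this]
    exact zpow_lt_zpow_right₀ hq (by omega)
  linarith

private lemma aux_g_eq {q : ℝ} (hq : 1 < q) (k : ℕ) (i : ℕ) :
    q ^ (-(i : ℤ) - (k : ℤ)) = (q⁻¹) ^ (i + k) := by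
  have hq0 : q ≠ 0 := by positivity
  rw [inv_pow, ← zpow_natCast q (i + k), ← zpow_neg]
  congr 1
  push_cast
  ring

private lemma aux_multipliable {q : ℝ} (hq : 1 < q) (k : ℕ) (hk : 1 ≤ k) :
    Multipliable (fun i : ℕ => 1 - q ^ (-(i : ℤ) - (k : ℤ))) := by
  have hq0 : (0:ℝ) < q := lt_trans one_pos hq
  have hk' : (1:ℤ) ≤ (k:ℤ) := by exact_mod_cast hk
  have hr0 : (0:ℝ) < q⁻¹ := inv_pos.mpr hq0
  have hr1 : q⁻¹ < 1 := inv_lt_one_of_one_lt₀ hq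
  have hsum : Summable (fun i : ℕ => Real.log (1 - q ^ (-(i : ℤ) - (k : ℤ)))) := by
    rw [← summable_abs_iff]
    refine Summable.of_nonneg_of_le (fun i => abs_nonneg _) ?_
      ((summable_geometric_of_lt_one hr0.le hr1).mul_left (q⁻¹ ^ k / (1 - q⁻¹)))
    intro i
    have hgpos := aux_g_pos hq (k : ℤ) hk' i
    have hgeq := aux_g_eq hq k i
    have hxle : q⁻¹ ^ (i + k) ≤ q⁻¹ ^ k := by
      calc q⁻¹ ^ (i + k) = q⁻¹ ^ k * q⁻¹ ^ i := by rw [pow_add]; ring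
      _ ≤ q⁻¹ ^ k * 1 :=
            mul_le_mul_of_nonneg_left (pow_le_one₀ hr0.le hr1.le) (by positivity)
      _ = q⁻¹ ^ k := mul_one _
    have hxle1 : q⁻¹ ^ k ≤ q⁻¹ := by
      calc q⁻¹ ^ k ≤ q⁻¹ ^ 1 := pow_le_pow_of_le_one hr0.le hr1.le hk
      _ = q⁻¹ := pow_one _
    have hgle1 : 1 - q ^ (-(i : ℤ) - (k : ℤ)) ≤ 1 := by
      have : (0:ℝ) < q ^ (-(i : ℤ) - (k : ℤ)) := by positivity
      linarith
    rw [abs_of_nonpos (Real.log_nonpos hgpos.le hgle1), ← Real.log_inv]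
    have h2 : Real.log (1 - q ^ (-(i : ℤ) - (k : ℤ)))⁻¹ ≤ (1 - q ^ (-(i : ℤ) - (k : ℤ)))⁻¹ - 1 :=
      Real.log_le_sub_one_of_pos (by positivity)
    have h3 : (1 - q ^ (-(i : ℤ) - (k : ℤ)))⁻¹ - 1
        = q ^ (-(i : ℤ) - (k : ℤ)) / (1 - q ^ (-(i : ℤ) - (k : ℤ))) := by
      field_simp
      ring
    have h4 : q⁻¹ ^ (i + k) / (1 - q⁻¹ ^ (i + k)) ≤ q⁻¹ ^ (i + k) / (1 - q⁻¹) := by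
      gcongr
      all_goals linarith
    calc Real.log (1 - q ^ (-(i : ℤ) - (k : ℤ)))⁻¹
        ≤ (1 - q ^ (-(i : ℤ) - (k : ℤ)))⁻¹ - 1 := h2
      _ = q ^ (-(i : ℤ) - (k : ℤ)) / (1 - q ^ (-(i : ℤ) - (k : ℤ))) := h3
      _ = q⁻¹ ^ (i + k) / (1 - q⁻¹ ^ (i + k)) := by rw [hgeq]
      _ ≤ q⁻¹ ^ (i + k) / (1 - q⁻¹) := h4
      _ = q⁻¹ ^ k / (1 - q⁻¹) * q⁻¹ ^ i := by rw [pow_add]; ring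
  exact Real.multipliable_of_summable_log (fun i => aux_g_pos hq (k:ℤ) hk' i) hsum

/-- For real `q > 1`, as `n → ∞` the quantity
`((q^{n+1}-1)/(q-1)) · q^{1-n}L(q,n,n-1)/(1 - q^{1-n} + q^{1-n}L(q,n,n-1))`, with
`L(q,n,n-1) = ∏_{i=2}^{n}(1-q^{-i})`, converges to `(q+1)·∏_{n=3}^{∞}(1 - q^{-n})`. -/
theorem stmt_10 (q : ℝ) (hq : 1 < q) :
    Tendsto (fun n : ℕ =>
      ((q ^ (n + 1) - 1) / (q - 1)) *
        (q ^ (1 - (n : ℤ)) * (∏ i ∈ Finset.Icc 2 n, (1 - q ^ (-(i : ℤ)))) /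
          (1 - q ^ (1 - (n : ℤ)) +
            q ^ (1 - (n : ℤ)) * ∏ i ∈ Finset.Icc 2 n, (1 - q ^ (-(i : ℤ))))))
      atTop
      (nhds ((q + 1) * ∏' i : ℕ, (1 - q ^ (-((i : ℤ) + 3))))) := by
  have hq0 : (0:ℝ) < q := lt_trans one_pos hq
  have hq0' : q ≠ 0 := hq0.ne'
  have hr0 : (0:ℝ) < q⁻¹ := inv_pos.mpr hq0
  have hr1 : q⁻¹ < 1 := inv_lt_one_of_one_lt₀ hq
  set g : ℕ → ℝ := fun i => 1 - q ^ (-(i : ℤ) - 2) with hg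
  have hmul : Multipliable g := by
    refine (aux_multipliable hq 2 one_le_two).congr fun i => ?_
    simp only [hg]
    norm_num
  have hmul1 : Multipliable (fun i : ℕ => g (i + 1)) := by
    refine (aux_multipliable hq 3 (by norm_num)).congr fun i => ?_
    simp only [hg]
    rw [show (-(i : ℤ) - ((3:ℕ):ℤ)) = -((i + 1 : ℕ) : ℤ) - 2 by push_cast; ring]
  set L : ℝ := ∏' i, g i with hL
  -- limit of epsilon
  have hε : Tendsto (fun n : ℕ => q ^ (1 - (n : ℤ))) atTop (nhds 0) := by
    have heq : ∀ n : ℕ, q ^ (1 - (n : ℤ)) = q * q⁻¹ ^ n := by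
      intro n
      rw [zpow_sub₀ hq0', zpow_one, zpow_natCast, inv_pow]
      rfl
    simp only [heq]
    have := (tendsto_pow_atTop_nhds_zero_of_lt_one hr0.le hr1).const_mul q
    simpa using this
  -- limit of partial products
  have hP : Tendsto (fun n : ℕ => ∏ i ∈ Finset.Icc 2 n, (1 - q ^ (-(i : ℤ)))) atTop (nhds L) := by
    have hreidx : ∀ n : ℕ, ∏ i ∈ Finset.Icc 2 n, (1 - q ^ (-(i : ℤ)))
        = ∏ i ∈ Finset.range (n - 1), g i := by
      intro n
      rw [← Finset.Ico_add_one_right_eq_Icc, Finset.prod_Ico_eq_prod_range]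
      have hn : n + 1 - 2 = n - 1 := by omega
      rw [hn]
      refine Finset.prod_congr rfl fun i _ => ?_
      simp only [hg]
      rw [show (-((2 + i : ℕ) : ℤ)) = -((i : ℕ) : ℤ) - 2 by push_cast; ring]
    simp only [hreidx]
    exact (hmul.hasProd.tendsto_prod_nat).comp (tendsto_sub_atTop_nat 1)
  -- rewrite the function
  have hfun : ∀ n : ℕ,
      ((q ^ (n + 1) - 1) / (q - 1)) *
        (q ^ (1 - (n : ℤ)) * (∏ i ∈ Finset.Icc 2 n, (1 - q ^ (-(i : ℤ)))) /
          (1 - q ^ (1 - (n : ℤ)) +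
            q ^ (1 - (n : ℤ)) * ∏ i ∈ Finset.Icc 2 n, (1 - q ^ (-(i : ℤ)))))
      = ((q ^ 2 - q ^ (1 - (n : ℤ))) / (q - 1)) * (∏ i ∈ Finset.Icc 2 n, (1 - q ^ (-(i : ℤ)))) /
          (1 - q ^ (1 - (n : ℤ)) +
            q ^ (1 - (n : ℤ)) * ∏ i ∈ Finset.Icc 2 n, (1 - q ^ (-(i : ℤ)))) := by
    intro n
    have key : (q ^ (n + 1) - 1) * q ^ (1 - (n : ℤ)) = q ^ 2 - q ^ (1 - (n : ℤ)) := by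
      have : q ^ (n + 1) * q ^ (1 - (n : ℤ)) = q ^ 2 := by
        rw [← zpow_natCast q (n + 1), ← zpow_add₀ hq0', ← zpow_natCast q 2]
        congr 1
        push_cast
        ring
      linear_combination this - q ^ (1 - (n : ℤ))
    rw [mul_div_assoc', ← mul_assoc, div_mul_eq_mul_div, key, mul_div_assoc, mul_div_assoc']
  have hnum : Tendsto (fun n : ℕ =>
      ((q ^ 2 - q ^ (1 - (n : ℤ))) / (q - 1)) * ∏ i ∈ Finset.Icc 2 n, (1 - q ^ (-(i : ℤ))))
      atTop (nhds ((q ^ 2 - 0) / (q - 1) * L)) :=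
    ((tendsto_const_nhds.sub hε).div_const _).mul hP
  have hden : Tendsto (fun n : ℕ =>
      1 - q ^ (1 - (n : ℤ)) + q ^ (1 - (n : ℤ)) * ∏ i ∈ Finset.Icc 2 n, (1 - q ^ (-(i : ℤ))))
      atTop (nhds (1 - 0 + 0 * L)) :=
    (tendsto_const_nhds.sub hε).add (hε.mul hP)
  have hdiv := hnum.div hden (by norm_num)
  have hfinal : (q ^ 2 - 0) / (q - 1) * L / (1 - 0 + 0 * L)
      = (q + 1) * ∏' i : ℕ, (1 - q ^ (-((i : ℤ) + 3))) := by
    have hT : (∏' i : ℕ, (1 - q ^ (-((i : ℤ) + 3)))) = ∏' i : ℕ, g (i + 1) := by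
      refine tprod_congr fun i => ?_
      simp only [hg]
      rw [show (-((i : ℤ) + 3)) = -((i + 1 : ℕ) : ℤ) - 2 by push_cast; ring]
    have hsplit : L = g 0 * ∏' i : ℕ, g (i + 1) := tprod_eq_zero_mul' hmul1
    rw [hT, hsplit]
    have hg0 : g 0 = 1 - (q ^ 2)⁻¹ := by
      simp only [hg]
      rw [show (-((0:ℕ) : ℤ) - 2) = -((2:ℕ):ℤ) by norm_num, zpow_neg, zpow_natCast]
    rw [hg0]
    have hq1 : q - 1 ≠ 0 := by linarith
    field_simp
    ring
  rw [hfinal] at hdiv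
  exact hdiv.congr (fun n => (hfun n).symm)
end
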